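/- Let M be a monoid with finite generating set S and word semimetric d_S. Left translation by every element of M is an isometric embedding of (M, d_S) into itself if and only if M is left cancellative. -/

import Mathlib

open scoped ENNReal NNReal

def IsSemimetric {X : Type*} (d : X → X → ℝ≥0∞) : Prop :=
  (∀ x y, d x y = 0 ↔ x = y) ∧ ∀ x y z, d x z ≤ d x y + d y z

noncomputable def wordDist {M : Type*} [Monoid M] (S : Set M) (x y : M) : ℝ≥0∞ :=
  sInf {n : ℝ≥0∞ | ∃ w : List M, (∀ s ∈ w, s ∈ S) ∧ x * w.prod = y ∧ n = w.length}

noncomputable def setDist {X : Type*} (d : X → X → ℝ≥0∞) (A B : Set X) : ℝ≥0∞ :=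
  ⨅ a ∈ A, ⨅ b ∈ B, d a b

theorem stmt_4 {M : Type*} [Monoid M] (S : Set M) (hS : S.Finite)
    (hgen : Submonoid.closure S = ⊤) :
    (∀ m x y : M, wordDist S (m * x) (m * y) = wordDist S x y) ↔
    (∀ m x y : M, m * x = m * y → x = y) := by
  constructor
  · intro h m x y hmxy
    have h0 : wordDist S (m * x) (m * y) = 0 := by
      rw [hmxy]
      refine le_antisymm ?_ (zero_le)
      refine sInf_le ?_
      exact ⟨[], by simp⟩
    rw [h] at h0
    by_contra hxy
    have h1 : (1 : ℝ≥0∞) ≤ wordDist S x y := by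
      refine le_sInf ?_
      rintro n ⟨w, -, hprod, rfl⟩
      cases w with
      | nil => exact absurd (by simpa using hprod) hxy
      | cons a l => simp [Nat.one_le_iff_ne_zero]
    rw [h0] at h1
    exact absurd h1 (by simp)
  · intro h m x y
    unfold wordDist
    congr 1
    ext n
    simp only [Set.mem_setOf_eq]
    constructor
    · rintro ⟨w, hw, hprod, rfl⟩
      refine ⟨w, hw, ?_, rfl⟩
      apply h m
      rw [← mul_assoc, hprod]
    · rintro ⟨w, hw, hprod, rfl⟩
      exact ⟨w, hw, by rw [mul_assoc, hprod], rfl⟩
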